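/- For 0 < α < 1, the matrix power map F_α(S) = S^α (defined via spectral decomposition) is (α, m^{(1-α)/2})-Hölder continuous on the cone of m×m real symmetric positive semi-definite matrices: ‖S₁^α - S₂^α‖_F ≤ m^{(1-α)/2} ‖S₁ - S₂‖_F^α. -/

import Mathlib

open Matrix

/-- The Frobenius norm of a real matrix. -/
noncomputable def frobNorm {m : ℕ} (A : Matrix (Fin m) (Fin m) ℝ) : ℝ :=
  Real.sqrt (∑ i, ∑ j, (A i j) ^ 2)

/-- The matrix power map S ↦ S^α defined via the spectral decomposition. -/
noncomputable def matPow {m : ℕ} {S : Matrix (Fin m) (Fin m) ℝ}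
    (hS : S.IsHermitian) (α : ℝ) : Matrix (Fin m) (Fin m) ℝ :=
  (hS.eigenvectorUnitary : Matrix (Fin m) (Fin m) ℝ) *
    Matrix.diagonal (fun i => hS.eigenvalues i ^ α) *
    star (hS.eigenvectorUnitary : Matrix (Fin m) (Fin m) ℝ)

/- Auxiliary scalar subadditivity of rpow on nonnegative reals. -/
lemma aux_rpow_add_le {x y : ℝ} (hx : 0 ≤ x) (hy : 0 ≤ y) {p : ℝ} (hp : 0 ≤ p) (hp1 : p ≤ 1) :
    (x + y) ^ p ≤ x ^ p + y ^ p := by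
  lift x to NNReal using hx
  lift y to NNReal using hy
  exact_mod_cast NNReal.rpow_add_le_add_rpow x y hp hp1

/- Hölder continuity of the scalar power function, ordered version. -/
lemma aux_rpow_sub_rpow_le {x y : ℝ} (hy : 0 ≤ y) (h : y ≤ x) {p : ℝ} (hp : 0 ≤ p)
    (hp1 : p ≤ 1) : x ^ p - y ^ p ≤ (x - y) ^ p := by
  have hxy : 0 ≤ x - y := by linarith
  have := aux_rpow_add_le hxy hy hp hp1
  rw [sub_add_cancel] at this
  linarith

/- Hölder continuity of the scalar power function, squared version. -/
lemma aux_holder_sq {α : ℝ} (hα0 : 0 < α) (hα1 : α ≤ 1) {x y : ℝ} (hx : 0 ≤ x) (hy : 0 ≤ y) :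
    (x ^ α - y ^ α) ^ 2 ≤ ((x - y) ^ 2) ^ α := by
  have habs : |x ^ α - y ^ α| ≤ |x - y| ^ α := by
    rcases le_total y x with h | h
    · rw [abs_of_nonneg (by linarith : 0 ≤ x - y),
        abs_of_nonneg (sub_nonneg.2 (Real.rpow_le_rpow hy h hα0.le))]
      exact aux_rpow_sub_rpow_le hy h hα0.le hα1
    · rw [abs_of_nonpos (by linarith : x - y ≤ 0),
        abs_of_nonpos (sub_nonpos.2 (Real.rpow_le_rpow hx h hα0.le)),
        show -(x - y) = y - x by ring, neg_sub]
      exact aux_rpow_sub_rpow_le hx h hα0.le hα1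
  calc (x ^ α - y ^ α) ^ 2 = |x ^ α - y ^ α| ^ 2 := (sq_abs _).symm
    _ ≤ (|x - y| ^ α) ^ 2 := by
        exact pow_le_pow_left₀ (abs_nonneg _) habs 2
    _ = ((x - y) ^ 2) ^ α := by
        rw [← Real.rpow_natCast (|x - y| ^ α) 2, ← Real.rpow_mul (abs_nonneg _),
          mul_comm, Real.rpow_natCast_mul (abs_nonneg _), sq_abs]

/- Sum of squared entries as a trace. -/
lemma aux_sum_sq_eq_trace {m : ℕ} (A : Matrix (Fin m) (Fin m) ℝ) :
    ∑ i, ∑ j, (A i j) ^ 2 = Matrix.trace (star A * A) := by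
  simp only [Matrix.trace, Matrix.diag, Matrix.mul_apply, Matrix.star_apply, star_trivial, sq]
  exact Finset.sum_comm

/- Invariance of the sum of squares under orthogonal conjugation. -/
lemma aux_sum_sq_conj {m : ℕ} {U V : Matrix (Fin m) (Fin m) ℝ} (X : Matrix (Fin m) (Fin m) ℝ)
    (hU : U ∈ Matrix.unitaryGroup (Fin m) ℝ) (hV : V ∈ Matrix.unitaryGroup (Fin m) ℝ) :
    ∑ i, ∑ j, ((star U * X * V) i j) ^ 2 = ∑ i, ∑ j, (X i j) ^ 2 := by
  have hU1 : U * star U = 1 := Matrix.mem_unitaryGroup_iff.mp hU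
  have hV1 : V * star V = 1 := Matrix.mem_unitaryGroup_iff.mp hV
  rw [aux_sum_sq_eq_trace, aux_sum_sq_eq_trace]
  have key : star (star U * X * V) * (star U * X * V) = star V * (star X * X) * V := by
    simp only [StarMul.star_mul, star_star, Matrix.mul_assoc]
    rw [← Matrix.mul_assoc U (star U), hU1, Matrix.one_mul]
  rw [key, Matrix.trace_mul_comm, ← Matrix.mul_assoc, Matrix.mul_assoc V (star V),
    ← Matrix.mul_assoc V (star V), hV1, Matrix.one_mul]

/- The key numeric inequality, a form of Hölder's inequality. -/
lemma aux_key_ineq {ι : Type*} [Fintype ι] {α : ℝ} (hα0 : 0 < α) (hα1 : α < 1)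
    (c D : ι → ℝ) (hc : ∀ i, 0 ≤ c i) (hD : ∀ i, 0 ≤ D i) :
    ∑ i, c i * D i ^ α ≤ (∑ i, c i) ^ (1 - α) * (∑ i, c i * D i) ^ α := by
  have hp : (1 : ℝ) ≤ α⁻¹ := (one_le_inv₀ hα0).2 hα1.le
  have h := Real.inner_le_weight_mul_Lp_of_nonneg Finset.univ hp c (fun i => D i ^ α)
    hc (fun i => Real.rpow_nonneg (hD i) α)
  have hinv : α⁻¹⁻¹ = α := inv_inv α
  simp only [hinv] at h
  have hexp : ∀ i, (D i ^ α) ^ α⁻¹ = D i := fun i => by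
    rw [← Real.rpow_mul (hD i), mul_inv_cancel₀ hα0.ne', Real.rpow_one]
  simp only [hexp] at h
  exact h

set_option maxHeartbeats 2000000 in
/-- For 0 < α < 1, the matrix power map is (α, m^{(1-α)/2})-Hölder continuous on the
cone of positive semi-definite matrices. -/
theorem matPow_holder (m : ℕ) (α : ℝ) (hα0 : 0 < α) (hα1 : α < 1)
    (S₁ S₂ : Matrix (Fin m) (Fin m) ℝ)
    (h₁ : S₁.PosSemidef) (h₂ : S₂.PosSemidef) :
    frobNorm (matPow h₁.isHermitian α - matPow h₂.isHermitian α) ≤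
      (m : ℝ) ^ ((1 - α) / 2) * frobNorm (S₁ - S₂) ^ α := by
  classical
  set U : Matrix (Fin m) (Fin m) ℝ :=
    (h₁.isHermitian.eigenvectorUnitary : Matrix (Fin m) (Fin m) ℝ) with hUdef
  set V : Matrix (Fin m) (Fin m) ℝ :=
    (h₂.isHermitian.eigenvectorUnitary : Matrix (Fin m) (Fin m) ℝ) with hVdef
  have hUm : U ∈ Matrix.unitaryGroup (Fin m) ℝ := (h₁.isHermitian.eigenvectorUnitary).2
  have hVm : V ∈ Matrix.unitaryGroup (Fin m) ℝ := (h₂.isHermitian.eigenvectorUnitary).2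
  have hU' : star U * U = 1 := Matrix.mem_unitaryGroup_iff'.mp hUm
  have hV' : star V * V = 1 := Matrix.mem_unitaryGroup_iff'.mp hVm
  set d := h₁.isHermitian.eigenvalues with hddef
  set e := h₂.isHermitian.eigenvalues with hedef
  have hd : ∀ i, 0 ≤ d i := fun i => h₁.eigenvalues_nonneg i
  have he : ∀ i, 0 ≤ e i := fun i => h₂.eigenvalues_nonneg i
  set W : Matrix (Fin m) (Fin m) ℝ := star U * V with hWdef
  -- entries after conjugation, for the powered matrices
  have hPow : star U * (matPow h₁.isHermitian α - matPow h₂.isHermitian α) * V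
      = Matrix.diagonal (fun i => d i ^ α) * W - W * Matrix.diagonal (fun j => e j ^ α) := by
    unfold matPow
    rw [Matrix.mul_sub, Matrix.sub_mul]
    congr 1
    · simp only [Matrix.mul_assoc, hWdef]
      rw [← Matrix.mul_assoc (star U) U, hU', Matrix.one_mul]
    · simp only [Matrix.mul_assoc, ← hVdef, hV', Matrix.mul_one, hWdef, ← hedef]
  -- entries after conjugation, for the original matrices
  have hDiff : star U * (S₁ - S₂) * V
      = Matrix.diagonal d * W - W * Matrix.diagonal e := by
    have e₁ := h₁.isHermitian.spectral_theorem
    have e₂ := h₂.isHermitian.spectral_theorem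
    rw [RCLike.ofReal_real_eq_id] at e₁ e₂
    simp only [Function.id_comp, Unitary.conjStarAlgAut_apply] at e₁ e₂
    rw [e₁, e₂]
    rw [Matrix.mul_sub, Matrix.sub_mul]
    congr 1
    · simp only [Matrix.mul_assoc, hWdef]
      rw [← Matrix.mul_assoc (star U) U, hU', Matrix.one_mul]
    · simp only [Matrix.mul_assoc, ← hVdef, hV', Matrix.mul_one, hWdef, ← hedef]
  have hA1 : ∑ i, ∑ j, ((matPow h₁.isHermitian α - matPow h₂.isHermitian α) i j) ^ 2
      = ∑ i, ∑ j, ((d i ^ α - e j ^ α) * W i j) ^ 2 := by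
    rw [← aux_sum_sq_conj _ hUm hVm, hPow]
    refine Finset.sum_congr rfl fun i _ => Finset.sum_congr rfl fun j _ => ?_
    simp only [Matrix.sub_apply, Matrix.diagonal_mul, Matrix.mul_diagonal]
    ring
  have hA2 : ∑ i, ∑ j, ((S₁ - S₂) i j) ^ 2
      = ∑ i, ∑ j, ((d i - e j) * W i j) ^ 2 := by
    rw [← aux_sum_sq_conj _ hUm hVm, hDiff]
    refine Finset.sum_congr rfl fun i _ => Finset.sum_congr rfl fun j _ => ?_
    simp only [Matrix.sub_apply, Matrix.diagonal_mul, Matrix.mul_diagonal]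
    ring
  have hWsum : ∑ i, ∑ j, (W i j) ^ 2 = (m : ℝ) := by
    have h1 := aux_sum_sq_conj (1 : Matrix (Fin m) (Fin m) ℝ) hUm hVm
    rw [Matrix.mul_one] at h1
    rw [hWdef, h1]
    simp [Matrix.one_apply, apply_ite (fun t : ℝ => t ^ 2)]
  -- the key inequality on the sums
  set a : ℝ := ∑ i, ∑ j, ((d i ^ α - e j ^ α) * W i j) ^ 2 with hadef
  set b : ℝ := ∑ i, ∑ j, ((d i - e j) * W i j) ^ 2 with hbdef
  have hb0 : 0 ≤ b := Finset.sum_nonneg fun i _ =>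
    Finset.sum_nonneg fun j _ => sq_nonneg _
  have hab : a ≤ (m : ℝ) ^ (1 - α) * b ^ α := by
    set c : Fin m × Fin m → ℝ := fun p => (W p.1 p.2) ^ 2 with hcdef
    set D : Fin m × Fin m → ℝ := fun p => (d p.1 - e p.2) ^ 2 with hDdef
    have hc : ∀ p, 0 ≤ c p := fun p => sq_nonneg _
    have hD : ∀ p, 0 ≤ D p := fun p => sq_nonneg _
    have ha' : a = ∑ i, ∑ j, ((d i ^ α - e j ^ α) * W i j) ^ 2 := hadef
    have step1 : a ≤ ∑ p : Fin m × Fin m, c p * D p ^ α := by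
      rw [hadef, Fintype.sum_prod_type]
      simp only [hcdef, hDdef]
      refine Finset.sum_le_sum fun i _ => Finset.sum_le_sum fun j _ => ?_
      rw [mul_pow]
      calc (d i ^ α - e j ^ α) ^ 2 * W i j ^ 2
          ≤ ((d i - e j) ^ 2) ^ α * W i j ^ 2 :=
            mul_le_mul_of_nonneg_right
              (aux_holder_sq hα0 hα1.le (hd i) (he j)) (sq_nonneg _)
        _ = W i j ^ 2 * ((d i - e j) ^ 2) ^ α := mul_comm _ _
    have step2 : ∑ p : Fin m × Fin m, c p * D p ^ α
        ≤ (∑ p : Fin m × Fin m, c p) ^ (1 - α) * (∑ p : Fin m × Fin m, c p * D p) ^ α :=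
      aux_key_ineq hα0 hα1 c D hc hD
    have hsc : ∑ p : Fin m × Fin m, c p = (m : ℝ) := by
      rw [Fintype.sum_prod_type]
      simp only [hcdef]
      exact hWsum
    have hscD : ∑ p : Fin m × Fin m, c p * D p = b := by
      rw [Fintype.sum_prod_type, hbdef]
      simp only [hcdef, hDdef]
      refine Finset.sum_congr rfl fun i _ => Finset.sum_congr rfl fun j _ => ?_
      ring
    rw [hsc, hscD] at step2
    exact step1.trans step2
  -- conclude
  rw [frobNorm, frobNorm, hA1, hA2]
  calc Real.sqrt a ≤ Real.sqrt ((m : ℝ) ^ (1 - α) * b ^ α) := Real.sqrt_le_sqrt hab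
    _ = (m : ℝ) ^ ((1 - α) / 2) * Real.sqrt b ^ α := by
        rw [Real.sqrt_mul (Real.rpow_nonneg (Nat.cast_nonneg m) _),
          Real.sqrt_eq_rpow, Real.sqrt_eq_rpow, Real.sqrt_eq_rpow,
          ← Real.rpow_mul (Nat.cast_nonneg m), ← Real.rpow_mul hb0,
          ← Real.rpow_mul hb0]
        ring_nf
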